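/- arXiv:2110.02435 — 2 statements merged into one kernel-verified Lean document; each statement's English description precedes it below -/
import Mathlib

section
/- Let S be a regular local ring, f a nonzero nonunit of S, and d ≥ 3. If (φ₁, …, φ_{d-1}) is an indecomposable matrix factorization of f with d−1 factors, then the d-fold matrix factorization (φ₁, …, φ_{d-1}, 1_{F₁}) obtained by appending the identity map is indecomposable in the category of d-fold matrix factorizations of f. -/
open IsLocalRing

/-- A Noetherian local ring is regular if its maximal ideal can be generated by
`dim` many elements. -/
def IsRegularLocal (S : Type*) [CommRing S] [IsLocalRing S] : Prop :=
  IsNoetherianRing S ∧ ∃ s : Finset S, Ideal.span (s : Set S) = maximalIdeal S ∧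
    (s.card : WithBot (WithTop ℕ)) = ringKrullDim S

/-- A `d`-fold matrix factorization of `f`. -/
def IsMatrixFactorization {S : Type*} [CommRing S] (f : S) {d n : ℕ}
    (φ : Fin d → Matrix (Fin n) (Fin n) S) : Prop :=
  (List.ofFn φ).prod = f • (1 : Matrix (Fin n) (Fin n) S)

/-- An endomorphism of a `d`-fold matrix factorization: a tuple of matrices
`e i : F_i → F_i` with `e i * φ i = φ i * e (i+1)` (indices mod `d`). -/
def MFEndo {S : Type*} [CommRing S] {d n : ℕ} [NeZero d]
    (φ e : Fin d → Matrix (Fin n) (Fin n) S) : Prop :=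
  ∀ i, e i * φ i = φ i * e (i + 1)

/-- A matrix factorization is indecomposable if its only idempotent endomorphisms
are `0` and `1`. -/
def MFIndecomposable {S : Type*} [CommRing S] (f : S) {d n : ℕ} [NeZero d]
    (φ : Fin d → Matrix (Fin n) (Fin n) S) : Prop :=
  IsMatrixFactorization f φ ∧
    ∀ e : Fin d → Matrix (Fin n) (Fin n) S, MFEndo φ e → (∀ i, e i * e i = e i) →
      e = 0 ∨ e = 1

/-- over a regular local ring, appending the identity map to an
indecomposable `(d-1)`-fold matrix factorization of a nonzero nonunit `f`
(here `d = m + 1 ≥ 3`) yields an indecomposable `d`-fold matrix factorization. -/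
theorem append_identity_indecomposable {S : Type*} [CommRing S] [IsLocalRing S]
    (hreg : IsRegularLocal S) (f : S) (hf0 : f ≠ 0) (hfu : ¬ IsUnit f)
    (m n : ℕ) (hm : 2 ≤ m) [NeZero m]
    (φ : Fin m → Matrix (Fin n) (Fin n) S)
    (hindec : MFIndecomposable f φ) :
    MFIndecomposable f (Fin.snoc φ (1 : Matrix (Fin n) (Fin n) S)) := by
  obtain ⟨hMF, hind⟩ := hindec
  obtain ⟨k, rfl⟩ : ∃ k, m = k + 1 := ⟨m - 1, by omega⟩
  constructor
  · unfold IsMatrixFactorization at hMF ⊢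
    rw [List.ofFn_succ']
    simp only [Fin.snoc_castSucc, Fin.snoc_last, List.concat_eq_append,
      List.prod_append, List.prod_cons, List.prod_nil, mul_one]
    exact hMF
  · intro e hE hid
    have hlast : e (Fin.last (k + 1)) = e 0 := by
      have h := hE (Fin.last (k + 1))
      rw [Fin.snoc_last, mul_one, one_mul] at h
      have : Fin.last (k + 1) + 1 = 0 := by
        apply Fin.ext
        simp [Fin.val_add, Fin.last]
      rwa [this] at h
    set e' : Fin (k + 1) → Matrix (Fin n) (Fin n) S := fun i => e i.castSucc with he'
    have hkey : ∀ i : Fin (k + 1), e (i.castSucc + 1) = e' (i + 1) := by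
      intro i
      by_cases hi : i = Fin.last k
      · subst hi
        have h1 : (Fin.last k).castSucc + 1 = Fin.last (k + 1) := by
          apply Fin.ext
          simp [Fin.val_add, Fin.last]
        have h2 : (Fin.last k : Fin (k+1)) + 1 = 0 := by
          apply Fin.ext
          simp [Fin.val_add, Fin.last]
        rw [h1, h2, hlast, he']
        show e 0 = e (Fin.castSucc 0)
        simp
      · have hv : i.val < k := by
          have := i.isLt
          have : i.val ≠ k := fun h => hi (Fin.ext (by simp [Fin.last, h]))
          omega
        rw [he']
        show e (i.castSucc + 1) = e (i + 1).castSucc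
        have heq : i.castSucc + 1 = (i + 1).castSucc := by
          have hil : i < Fin.last k := lt_of_le_of_ne (Fin.le_last i) hi
          have hcl : i.castSucc < Fin.last (k + 1) := by
            rw [Fin.lt_iff_val_lt_val]
            simp [Fin.last]
            omega
          apply Fin.ext
          rw [Fin.val_add_one_of_lt hcl, Fin.coe_castSucc, Fin.coe_castSucc,
            Fin.val_add_one_of_lt hil]
        rw [heq]
    have hE' : MFEndo φ e' := by
      intro i
      have h := hE i.castSucc
      rw [Fin.snoc_castSucc] at h
      rw [hkey i] at h
      exact h
    have hid' : ∀ i, e' i * e' i = e' i := fun i => hid i.castSucc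
    rcases hind e' hE' hid' with h0 | h1
    · left
      funext j
      refine Fin.lastCases ?_ ?_ j
      · rw [hlast]
        have : e 0 = e' 0 := by rw [he']; congr 1
        rw [this, h0]; rfl
      · intro i
        have : e i.castSucc = e' i := rfl
        rw [this, h0]; rfl
    · right
      funext j
      refine Fin.lastCases ?_ ?_ j
      · rw [hlast]
        have : e 0 = e' 0 := by rw [he']; congr 1
        rw [this, h1]; rfl
      · intro i
        have : e i.castSucc = e' i := rfl
        rw [this, h1]; rfl
end

section
/- Let k be an algebraically closed field of characteristic ≠ 3, S = k⟦x,y,z⟧, and let (a,b,c) ∈ k³ satisfy a³+b³+c³ = 0 and abc ≠ 0. Then the Moore matrix X_{abc} = [[ax, bz, cy],[by, cx, az],[cz, ay, bx]] satisfies det X_{abc} = abc·(x³+y³+z³), and the pair (X_{abc}, (1/(abc))·adj(X_{abc})) is a matrix factorization of x³+y³+z³ with 2 factors. -/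
open MvPowerSeries

/-- for `k` algebraically closed of characteristic `≠ 3`,
`S = k⟦x,y,z⟧`, and `(a,b,c) ∈ k³` with `a³+b³+c³ = 0` and `abc ≠ 0`, the Moore
matrix `X_{abc}` has determinant `abc·(x³+y³+z³)` and together with
`(1/(abc))·adj(X_{abc})` forms a matrix factorization of `x³+y³+z³` with 2 factors. -/
theorem moore_matrix_factorization {k : Type*} [Field k] [IsAlgClosed k]
    (hchar : (3 : k) ≠ 0) (a b c : k) (habc : a ^ 3 + b ^ 3 + c ^ 3 = 0)
    (h0 : a * b * c ≠ 0) :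
    let S := MvPowerSeries (Fin 3) k
    let x : S := X 0
    let y : S := X 1
    let z : S := X 2
    let M : Matrix (Fin 3) (Fin 3) S :=
      !![C (σ := Fin 3) (R := k) a * x, C (σ := Fin 3) (R := k) b * z, C (σ := Fin 3) (R := k) c * y;
         C (σ := Fin 3) (R := k) b * y, C (σ := Fin 3) (R := k) c * x, C (σ := Fin 3) (R := k) a * z;
         C (σ := Fin 3) (R := k) c * z, C (σ := Fin 3) (R := k) a * y, C (σ := Fin 3) (R := k) b * x]
    M.det = C (σ := Fin 3) (R := k) (a * b * c) * (x ^ 3 + y ^ 3 + z ^ 3) ∧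
      M * (C (σ := Fin 3) (R := k) (a * b * c)⁻¹ • M.adjugate)
        = (x ^ 3 + y ^ 3 + z ^ 3) • (1 : Matrix (Fin 3) (Fin 3) S) ∧
      (C (σ := Fin 3) (R := k) (a * b * c)⁻¹ • M.adjugate) * M
        = (x ^ 3 + y ^ 3 + z ^ 3) • (1 : Matrix (Fin 3) (Fin 3) S) := by
  intro S x y z M
  have hC : (C (σ := Fin 3) (R := k) a) ^ 3 + (C (σ := Fin 3) (R := k) b) ^ 3 + (C (σ := Fin 3) (R := k) c) ^ 3 = 0 := by
    rw [← map_pow, ← map_pow, ← map_pow, ← map_add, ← map_add, habc, map_zero]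
  have hdet : M.det = C (σ := Fin 3) (R := k) (a * b * c) * (x ^ 3 + y ^ 3 + z ^ 3) := by
    have : M.det = M 0 0 * M 1 1 * M 2 2 - M 0 0 * M 1 2 * M 2 1 - M 0 1 * M 1 0 * M 2 2
        + M 0 1 * M 1 2 * M 2 0 + M 0 2 * M 1 0 * M 2 1 - M 0 2 * M 1 1 * M 2 0 :=
      Matrix.det_fin_three M
    rw [this]
    have e00 : M 0 0 = C (σ := Fin 3) (R := k) a * x := rfl
    have e01 : M 0 1 = C (σ := Fin 3) (R := k) b * z := rfl
    have e02 : M 0 2 = C (σ := Fin 3) (R := k) c * y := rfl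
    have e10 : M 1 0 = C (σ := Fin 3) (R := k) b * y := rfl
    have e11 : M 1 1 = C (σ := Fin 3) (R := k) c * x := rfl
    have e12 : M 1 2 = C (σ := Fin 3) (R := k) a * z := rfl
    have e20 : M 2 0 = C (σ := Fin 3) (R := k) c * z := rfl
    have e21 : M 2 1 = C (σ := Fin 3) (R := k) a * y := rfl
    have e22 : M 2 2 = C (σ := Fin 3) (R := k) b * x := rfl
    rw [e00, e01, e02, e10, e11, e12, e20, e21, e22, map_mul, map_mul]
    linear_combination (-(x * y * z)) * hC
  have h1 : C (σ := Fin 3) (R := k) (a * b * c)⁻¹ * C (σ := Fin 3) (R := k) (a * b * c) = 1 := by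
    rw [← map_mul, inv_mul_cancel₀ h0, map_one]
  refine ⟨hdet, ?_, ?_⟩
  · rw [Matrix.mul_smul, Matrix.mul_adjugate, hdet, smul_smul, ← mul_assoc, h1, one_mul]
  · rw [Matrix.smul_mul, Matrix.adjugate_mul, hdet, smul_smul, ← mul_assoc, h1, one_mul]
end
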